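/- If a normal pair (G⁺, G⁻) of geodesic graphs on S² with at least one crossing has width greater than two, then its refinement graph H contains a well-formed loop. -/

import Mathlib

open scoped RealInnerProductSpace

noncomputable section

/-- `ℝ³` as a Euclidean space. -/
abbrev E3 : Type := EuclideanSpace ℝ (Fin 3)

/-- The unit sphere `S²` of `ℝ³`. -/
def S2 : Set E3 := Metric.sphere 0 1

/-- The geodesic arc between two points of `S²`:
`arc a b = S² ∩ {s•a + t•b : s ≥ 0, t ≥ 0}`. -/
def arc (a b : E3) : Set E3 :=
  S2 ∩ {x | ∃ s t : ℝ, 0 ≤ s ∧ 0 ≤ t ∧ x = s • a + t • b}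

lemma arc_comm (a b : E3) : arc a b = arc b a := by
  unfold arc
  ext x
  simp only [Set.mem_inter_iff, Set.mem_setOf_eq]
  constructor <;> rintro ⟨hx, s, t, hs, ht, rfl⟩ <;>
    exact ⟨hx, t, s, ht, hs, add_comm _ _⟩

/-- A geodesic graph on `S²`: a finite vertex set contained in `S²` and a finite
set of edges, recorded by their pairs of endpoints, which are geodesic arcs between
distinct non-antipodal vertices; no vertex lies in the relative interior of an edge,
and two distinct edges meet only in common endpoints. -/
structure GeoGraph where
  verts : Set E3
  edges : Set (E3 × E3)
  verts_finite : verts.Finite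
  edges_finite : edges.Finite
  verts_sub : verts ⊆ S2
  ends_mem : ∀ p ∈ edges, p.1 ∈ verts ∧ p.2 ∈ verts
  ends_ne : ∀ p ∈ edges, p.1 ≠ p.2
  ends_nonantip : ∀ p ∈ edges, p.2 ≠ -p.1
  no_vertex_interior : ∀ p ∈ edges, ∀ v ∈ verts, v ∈ arc p.1 p.2 → v = p.1 ∨ v = p.2
  edges_meet_ends : ∀ p ∈ edges, ∀ q ∈ edges, arc p.1 p.2 ≠ arc q.1 q.2 →
    arc p.1 p.2 ∩ arc q.1 q.2 ⊆ (({p.1, p.2} : Set E3) ∩ ({q.1, q.2} : Set E3))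

/-- The point set of a geodesic graph: the union of its edges. -/
def GeoGraph.pointSet (G : GeoGraph) : Set E3 :=
  ⋃ p ∈ G.edges, arc p.1 p.2

/-- A pair of geodesic graphs is a *normal pair* if no vertex of either graph lies in the
point set of the other, each edge of one meets each edge of the other in at most one
point, and no edge of one meeting an edge of the other lies with it in a common
2-dimensional linear subspace of `ℝ³` (so all intersections are transversal crossings). -/
structure IsNormalPair (Gp Gm : GeoGraph) : Prop where
  vertsP_off : ∀ v ∈ Gp.verts, v ∉ Gm.pointSet
  vertsM_off : ∀ v ∈ Gm.verts, v ∉ Gp.pointSet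
  single_cross : ∀ p ∈ Gp.edges, ∀ q ∈ Gm.edges,
    (arc p.1 p.2 ∩ arc q.1 q.2).Subsingleton
  transversal : ∀ p ∈ Gp.edges, ∀ q ∈ Gm.edges,
    (arc p.1 p.2 ∩ arc q.1 q.2).Nonempty →
    ∀ W : Submodule ℝ E3, Module.finrank ℝ W = 2 →
      ¬ (({p.1, p.2, q.1, q.2} : Set E3) ⊆ (W : Set E3))

/-- The crossings of a pair of geodesic graphs: the intersection of their point sets. -/
def crossings (Gp Gm : GeoGraph) : Set E3 :=
  Gp.pointSet ∩ Gm.pointSet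

/-- The vertex set of the common refinement: vertices of both graphs together
with the crossings. -/
def refVerts (Gp Gm : GeoGraph) : Set E3 :=
  Gp.verts ∪ Gm.verts ∪ crossings Gp Gm

/-- The refinement graph `H` of a normal pair: two distinct points of `refVerts` are
adjacent exactly when some edge of `G⁺` or of `G⁻` contains both, and the subarc
between them contains no vertex of `H` other than themselves. -/
def refinement (Gp Gm : GeoGraph) : SimpleGraph E3 where
  Adj p q := p ≠ q ∧ p ∈ refVerts Gp Gm ∧ q ∈ refVerts Gp Gm ∧
    ∃ e : E3 × E3, (e ∈ Gp.edges ∨ e ∈ Gm.edges) ∧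
      p ∈ arc e.1 e.2 ∧ q ∈ arc e.1 e.2 ∧
      ∀ r ∈ refVerts Gp Gm, r ∈ arc p q → r = p ∨ r = q
  symm := ⟨by
    rintro p q ⟨hne, hp, hq, e, he, hpe, hqe, hmin⟩
    refine ⟨hne.symm, hq, hp, e, he, hqe, hpe, fun r hr hrr => ?_⟩
    have := hmin r hr (by rwa [arc_comm])
    tauto⟩
  loopless := ⟨fun p h => h.1 rfl⟩

/-- The width of a pair of geodesic graphs: the distance in the refinement graph `H`
between the vertex set of `G⁺` and the vertex set of `G⁻` (as an extended natural
number; it is `⊤` if no vertex of `G⁺` is connected to a vertex of `G⁻`). -/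
def pairWidth (Gp Gm : GeoGraph) : ℕ∞ :=
  ⨅ (vp ∈ Gp.verts) (vm ∈ Gm.verts), (refinement Gp Gm).edist vp vm

/-- The unit tangent vector at `x ∈ S²` of the geodesic arc from `x` towards `p`:
the unit vector proportional to `p - ⟪p,x⟫ • x`. -/
def tangentVec (x p : E3) : E3 :=
  ‖p - ⟪p, x⟫ • x‖⁻¹ • (p - ⟪p, x⟫ • x)

/-- The determinant of the three vectors `x, u, w` of `ℝ³`. -/
def det3 (x u w : E3) : ℝ :=
  Matrix.det (Matrix.of ![![x 0, x 1, x 2], ![u 0, u 1, u 2], ![w 0, w 1, w 2]])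

/-- The pair `{p, q}` is contained in an edge of the geodesic graph `G`. -/
def EdgeInGraph (G : GeoGraph) (p q : E3) : Prop :=
  ∃ e ∈ G.edges, p ∈ arc e.1 e.2 ∧ q ∈ arc e.1 e.2


lemma S2_norm {x : E3} (hx : x ∈ S2) : ‖x‖ = 1 := by
  simpa [S2] using hx

/-- pairwise linear independence, raw form -/
def Indep2 (a b : E3) : Prop := ∀ c d : ℝ, c • a + d • b = 0 → c = 0 ∧ d = 0

lemma Indep2.symm {a b : E3} (h : Indep2 a b) : Indep2 b a := by
  intro c d hcd
  have := h d c (by rw [add_comm]; exact hcd)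
  exact ⟨this.2, this.1⟩

lemma indep2_of_unit {a b : E3} (ha : ‖a‖ = 1) (hb : ‖b‖ = 1) (hne : a ≠ b)
    (hna : b ≠ -a) : Indep2 a b := by
  have ha0 : a ≠ 0 := fun h => by rw [h, norm_zero] at ha; norm_num at ha
  intro c d h
  rcases eq_or_ne d 0 with hd | hd
  · subst hd
    simp only [zero_smul, add_zero, smul_eq_zero] at h
    rcases h with h | h
    · exact ⟨h, rfl⟩
    · exact absurd h ha0
  · exfalso
    have hb' : b = (-(c/d)) • a := by
      have hh : d • b = -(c • a) := by
        rw [eq_neg_iff_add_eq_zero, add_comm]; exact h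
      calc b = d⁻¹ • (d • b) := by rw [smul_smul, inv_mul_cancel₀ hd, one_smul]
        _ = (-(c/d)) • a := by
            rw [hh, smul_neg, smul_smul, div_eq_inv_mul, neg_smul, mul_comm]
  -- |c/d| = 1
    have habs : |(-(c/d))| = 1 := by
      have h2 := congrArg norm hb'
      rw [norm_smul, ha, hb, Real.norm_eq_abs, mul_one] at h2
      exact h2.symm
    rcases (abs_eq (by norm_num : (0:ℝ) ≤ 1)).mp habs with h1 | h1
    · rw [h1, one_smul] at hb'
      exact hne hb'.symm
    · rw [h1, neg_one_smul] at hb'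
      exact hna hb'

lemma Indep2.unique {a b : E3} (h : Indep2 a b) {s t s' t' : ℝ}
    (e : s • a + t • b = s' • a + t' • b) : s = s' ∧ t = t' := by
  have h0 : (s - s') • a + (t - t') • b = 0 := by
    rw [sub_smul, sub_smul]
    rw [← sub_eq_zero] at e
    linear_combination (norm := module) e
  have := h _ _ h0
  constructor <;> linarith [this.1, this.2]

open Classical in
/-- coordinates of a point w.r.t. the pair `(a, b)` -/
noncomputable def co (a b x : E3) : ℝ × ℝ :=
  if h : ∃ st : ℝ × ℝ, x = st.1 • a + st.2 • b then h.choose else 0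

lemma co_spec {a b x : E3} (h : ∃ st : ℝ × ℝ, x = st.1 • a + st.2 • b) :
    x = (co a b x).1 • a + (co a b x).2 • b := by
  rw [co]
  split
  · exact (‹∃ st : ℝ × ℝ, x = st.1 • a + st.2 • b›).choose_spec
  · exact absurd h ‹_›

lemma co_eq {a b x : E3} (hab : Indep2 a b) {s t : ℝ} (hx : x = s • a + t • b) :
    co a b x = (s, t) := by
  have h : ∃ st : ℝ × ℝ, x = st.1 • a + st.2 • b := ⟨(s, t), hx⟩
  have h2 := hab.unique ((co_spec h).symm.trans hx)
  exact Prod.ext h2.1 h2.2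

lemma arc_co {a b x : E3} (hab : Indep2 a b) (hx : x ∈ arc a b) :
    ‖x‖ = 1 ∧ 0 ≤ (co a b x).1 ∧ 0 ≤ (co a b x).2 ∧
      x = (co a b x).1 • a + (co a b x).2 • b := by
  obtain ⟨hS, s, t, hs, ht, rfl⟩ := hx
  rw [co_eq hab rfl]
  exact ⟨S2_norm hS, hs, ht, rfl⟩

/-- orientation of `r` relative to `x` along the arc from `a` to `b` -/
noncomputable def delta (a b x r : E3) : ℝ :=
  (co a b r).2 * (co a b x).1 - (co a b r).1 * (co a b x).2

noncomputable def phi (a b r : E3) : ℝ :=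
  (co a b r).2 / ((co a b r).1 + (co a b r).2)

lemma arc_co_sum_pos {a b x : E3} (hab : Indep2 a b) (hx : x ∈ arc a b) :
    0 < (co a b x).1 + (co a b x).2 := by
  obtain ⟨hn, hs, ht, hrep⟩ := arc_co hab hx
  rcases lt_or_eq_of_le (add_nonneg hs ht) with h | h
  · exact h
  · exfalso
    have h1 : (co a b x).1 = 0 := by linarith
    have h2 : (co a b x).2 = 0 := by linarith
    rw [h1, h2, zero_smul, zero_smul, add_zero] at hrep
    rw [hrep, norm_zero] at hn; norm_num at hn

lemma delta_self {a b x : E3} : delta a b x x = 0 := by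
  unfold delta; ring

lemma delta_eq_zero {a b x r : E3} (hab : Indep2 a b) (hx : x ∈ arc a b)
    (hr : r ∈ arc a b) (h : delta a b x r = 0) : r = x := by
  obtain ⟨hxn, hxs, hxt, hxrep⟩ := arc_co hab hx
  obtain ⟨hrn, hrs, hrt, hrrep⟩ := arc_co hab hr
  set sx := (co a b x).1; set tx := (co a b x).2
  set sr := (co a b r).1; set tr := (co a b r).2
  unfold delta at h
  rcases eq_or_lt_of_le hxs with hs0 | hs0
  · -- sx = 0, so tx > 0
    have htx : 0 < tx := by
      rcases eq_or_lt_of_le hxt with ht0 | ht0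
      · exfalso
        rw [← hs0, ← ht0, zero_smul, zero_smul, add_zero] at hxrep
        rw [hxrep, norm_zero] at hxn; norm_num at hxn
      · exact ht0
    have hsr : sr = 0 := by nlinarith
    rw [← hs0, zero_smul, zero_add] at hxrep
    rw [hsr, zero_smul, zero_add] at hrrep
    have : tr = tx := by
      have h1 : ‖r‖ = tr * ‖b‖ := by rw [hrrep, norm_smul, Real.norm_eq_abs, abs_of_nonneg hrt]
      have h2 : ‖x‖ = tx * ‖b‖ := by rw [hxrep, norm_smul, Real.norm_eq_abs, abs_of_nonneg (le_of_lt htx)]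
      have hbne : ‖b‖ ≠ 0 := by
        intro hb0
        rw [hb0, mul_zero] at h2; rw [hxn] at h2; norm_num at h2
      rw [hxn] at h2; rw [hrn] at h1
      have h3 : tr * ‖b‖ = tx * ‖b‖ := by rw [← h1, ← h2]
      exact mul_right_cancel₀ hbne h3
    rw [hrrep, hxrep, this]
  · -- sx > 0 : r = (sr/sx) • x
    have hr2 : r = (sr / sx) • x := by
      rw [hxrep, smul_add, smul_smul, smul_smul, hrrep]
      have h1 : sr / sx * sx = sr := by field_simp
      have h2 : sr / sx * tx = tr := by
        field_simp
        nlinarith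
      rw [h1, h2]
    have : sr / sx = 1 := by
      have h1 := congrArg norm hr2
      rw [norm_smul, Real.norm_eq_abs, abs_of_nonneg (div_nonneg hrs (le_of_lt hs0)), hxn, hrn, mul_one] at h1
      exact h1.symm
    rw [hr2, this, one_smul]

lemma delta_phi {a b x r : E3} (hab : Indep2 a b) (hx : x ∈ arc a b)
    (hr : r ∈ arc a b) :
    delta a b x r = (phi a b r - phi a b x) *
      (((co a b x).1 + (co a b x).2) * ((co a b r).1 + (co a b r).2)) := by
  have h1 := arc_co_sum_pos hab hx
  have h2 := arc_co_sum_pos hab hr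
  have h1' : (co a b x).1 + (co a b x).2 ≠ 0 := ne_of_gt h1
  have h2' : (co a b r).1 + (co a b r).2 ≠ 0 := ne_of_gt h2
  have key : ∀ A B C D : ℝ, B ≠ 0 → D ≠ 0 → (A / B - C / D) * (D * B) = A * D - C * B := by
    intros A B C D hB hD
    field_simp
  unfold delta phi
  rw [key _ _ _ _ h2' h1']
  ring

lemma delta_pos_iff_phi {a b x r : E3} (hab : Indep2 a b) (hx : x ∈ arc a b)
    (hr : r ∈ arc a b) : 0 < delta a b x r ↔ phi a b x < phi a b r := by
  have h1 := arc_co_sum_pos hab hx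
  have h2 := arc_co_sum_pos hab hr
  rw [delta_phi hab hx hr]
  constructor
  · intro h
    nlinarith [mul_pos h1 h2]
  · intro h
    have h3 : 0 < phi a b r - phi a b x := by linarith
    exact mul_pos h3 (mul_pos h1 h2)

lemma delta_nonneg_iff_phi {a b x r : E3} (hab : Indep2 a b) (hx : x ∈ arc a b)
    (hr : r ∈ arc a b) : 0 ≤ delta a b x r ↔ phi a b x ≤ phi a b r := by
  have h1 := arc_co_sum_pos hab hx
  have h2 := arc_co_sum_pos hab hr
  rw [delta_phi hab hx hr]
  constructor
  · intro h
    nlinarith [mul_pos h1 h2]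
  · intro h
    have h3 : 0 ≤ phi a b r - phi a b x := by linarith
    exact mul_nonneg h3 (le_of_lt (mul_pos h1 h2))

lemma delta_swap {a b x r : E3} (hab : Indep2 a b) (hx : x ∈ arc a b)
    (hr : r ∈ arc a b) : delta b a x r = - delta a b x r := by
  obtain ⟨hxn, hxs, hxt, hxrep⟩ := arc_co hab hx
  obtain ⟨hrn, hrs, hrt, hrrep⟩ := arc_co hab hr
  have cx : co b a x = ((co a b x).2, (co a b x).1) :=
    co_eq hab.symm (by rw [add_comm] at hxrep; exact hxrep)
  have cr : co b a r = ((co a b r).2, (co a b r).1) :=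
    co_eq hab.symm (by rw [add_comm] at hrrep; exact hrrep)
  unfold delta
  rw [cx, cr]
  ring

lemma arc_endpoints_mem {a b : E3} (ha : ‖a‖ = 1) (hb : ‖b‖ = 1) :
    a ∈ arc a b ∧ b ∈ arc a b := by
  constructor
  · exact ⟨by simpa [S2] using ha, 1, 0, by norm_num, by norm_num, by simp⟩
  · exact ⟨by simpa [S2] using hb, 0, 1, by norm_num, by norm_num, by simp⟩

lemma co_a {a b : E3} (hab : Indep2 a b) : co a b a = (1, 0) :=
  co_eq hab (by simp)

lemma co_b {a b : E3} (hab : Indep2 a b) : co a b b = (0, 1) :=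
  co_eq hab (by simp)

lemma interior_coords {a b x : E3} (hab : Indep2 a b) (ha : ‖a‖ = 1) (hb : ‖b‖ = 1)
    (hx : x ∈ arc a b) (hxa : x ≠ a) (hxb : x ≠ b) :
    0 < (co a b x).1 ∧ 0 < (co a b x).2 := by
  obtain ⟨hxn, hxs, hxt, hxrep⟩ := arc_co hab hx
  constructor
  · rcases eq_or_lt_of_le hxs with h0 | h0
    · exfalso
      rw [← h0, zero_smul, zero_add] at hxrep
      have : (co a b x).2 = 1 := by
        have h1 := congrArg norm hxrep
        rw [norm_smul, Real.norm_eq_abs, abs_of_nonneg hxt, hb, mul_one, hxn] at h1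
        exact h1.symm
      rw [this, one_smul] at hxrep
      exact hxb hxrep
    · exact h0
  · rcases eq_or_lt_of_le hxt with h0 | h0
    · exfalso
      rw [← h0, zero_smul, add_zero] at hxrep
      have : (co a b x).1 = 1 := by
        have h1 := congrArg norm hxrep
        rw [norm_smul, Real.norm_eq_abs, abs_of_nonneg hxs, ha, mul_one, hxn] at h1
        exact h1.symm
      rw [this, one_smul] at hxrep
      exact hxa hxrep
    · exact h0

lemma arc_subset {a b p q : E3} (hp : p ∈ arc a b) (hq : q ∈ arc a b) :
    arc p q ⊆ arc a b := by
  obtain ⟨hpS, sp, tp, hsp, htp, rfl⟩ := hp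
  obtain ⟨hqS, sq, tq, hsq, htq, rfl⟩ := hq
  rintro r ⟨hrS, α, β, hα, hβ, rfl⟩
  refine ⟨hrS, α * sp + β * sq, α * tp + β * tq, by positivity, by positivity, ?_⟩
  simp only [smul_add, smul_smul, add_smul]
  abel

lemma arc_not_antipodal {a b x q : E3} (hab : Indep2 a b) (hx : x ∈ arc a b)
    (hq : q ∈ arc a b) : q ≠ -x := by
  obtain ⟨hxn, hxs, hxt, hxrep⟩ := arc_co hab hx
  obtain ⟨hqn, hqs, hqt, hqrep⟩ := arc_co hab hq
  intro h
  have h0 : ((co a b q).1 + (co a b x).1) • a + ((co a b q).2 + (co a b x).2) • b = 0 := by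
    have : q + x = 0 := by rw [h]; abel
    rw [hqrep, hxrep] at this
    linear_combination (norm := module) this
  obtain ⟨h1, h2⟩ := hab _ _ h0
  have hx1 : (co a b x).1 = 0 := by linarith
  have hx2 : (co a b x).2 = 0 := by linarith
  rw [hx1, hx2, zero_smul, zero_smul, add_zero] at hxrep
  rw [hxrep, norm_zero] at hxn
  norm_num at hxn

/-- normalization -/
def nmz (v : E3) : E3 := ‖v‖⁻¹ • v

lemma tangentVec_eq_nmz (x p : E3) : tangentVec x p = nmz (p - ⟪p, x⟫ • x) := rfl

lemma nmz_smul_pos {c : ℝ} (hc : 0 < c) (v : E3) : nmz (c • v) = nmz v := by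
  unfold nmz
  rw [norm_smul, Real.norm_eq_abs, abs_of_pos hc, smul_smul, mul_inv]
  rcases eq_or_ne v 0 with rfl | hv
  · simp
  · congr 1
    have hc' : c ≠ 0 := ne_of_gt hc
    rw [mul_comm, ← mul_assoc, mul_inv_cancel₀ hc', one_mul]

lemma nmz_smul_neg {c : ℝ} (hc : c < 0) (v : E3) : nmz (c • v) = -(nmz v) := by
  have h : c • v = (-c) • (-v) := by rw [neg_smul, smul_neg, neg_neg]
  rw [h, nmz_smul_pos (by linarith)]
  unfold nmz
  rw [norm_neg, smul_neg]

lemma nmz_zero_iff {v : E3} : nmz v = 0 ↔ v = 0 := by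
  unfold nmz
  constructor
  · intro h
    rcases smul_eq_zero.mp h with h | h
    · have : ‖v‖ = 0 := by
        rcases eq_or_ne (‖v‖ : ℝ) 0 with h' | h'
        · exact h'
        · exact absurd h (inv_ne_zero h')
      exact norm_eq_zero.mp this
    · exact h
  · intro h; rw [h, smul_zero]

lemma nmz_norm {v : E3} (hv : v ≠ 0) : ‖nmz v‖ = 1 := by
  have h0 : (0:ℝ) < ‖v‖ := norm_pos_iff.mpr hv
  unfold nmz
  rw [norm_smul, Real.norm_eq_abs, abs_of_pos (inv_pos.mpr h0), inv_mul_cancel₀ (ne_of_gt h0)]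

lemma norm_smul_nmz (v : E3) : v = ‖v‖ • nmz v := by
  unfold nmz
  rcases eq_or_ne v 0 with rfl | hv
  · simp
  · rw [smul_smul, mul_inv_cancel₀ (norm_ne_zero_iff.mpr hv), one_smul]

lemma inner_tangentVec {x p : E3} (hx : ‖x‖ = 1) : ⟪tangentVec x p, x⟫ = 0 := by
  rw [tangentVec_eq_nmz]
  unfold nmz
  rw [real_inner_smul_left, inner_sub_left, real_inner_smul_left]
  have : ⟪x, x⟫ = 1 := by
    rw [real_inner_self_eq_norm_sq, hx]; norm_num
  rw [this]
  ring

/-- central identity: the tangential parts of `a` and `b` at a point of the arc cancel. -/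
lemma central_identity {a b x : E3} (hx : ‖x‖ = 1)
    (hrep : x = (co a b x).1 • a + (co a b x).2 • b) :
    (co a b x).1 • (a - ⟪a, x⟫ • x) + (co a b x).2 • (b - ⟪b, x⟫ • x) = 0 := by
  have hxx : ⟪x, x⟫ = 1 := by rw [real_inner_self_eq_norm_sq, hx]; norm_num
  have hlin : (co a b x).1 * ⟪a, x⟫ + (co a b x).2 * ⟪b, x⟫ = 1 := by
    have h2 : ⟪(co a b x).1 • a + (co a b x).2 • b, x⟫ = ⟪x, x⟫ := by rw [← hrep]
    rw [inner_add_left, real_inner_smul_left, real_inner_smul_left] at h2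
    rw [h2, hxx]
  have expand : (co a b x).1 • (a - ⟪a, x⟫ • x) + (co a b x).2 • (b - ⟪b, x⟫ • x)
      = ((co a b x).1 • a + (co a b x).2 • b) - ((co a b x).1 * ⟪a, x⟫ + (co a b x).2 * ⟪b, x⟫) • x := by
    module
  rw [expand, ← hrep, hlin, one_smul, sub_self]

lemma tangent_decomp {a b x q : E3} (hab : Indep2 a b) (hx : x ∈ arc a b)
    (hq : q ∈ arc a b) (hs : 0 < (co a b x).1) :
    q - ⟪q, x⟫ • x = (delta a b x q / (co a b x).1) • (b - ⟪b, x⟫ • x) := by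
  obtain ⟨hxn, hxs, hxt, hxrep⟩ := arc_co hab hx
  obtain ⟨hqn, hqs, hqt, hqrep⟩ := arc_co hab hq
  set sx := (co a b x).1; set tx := (co a b x).2
  set sq := (co a b q).1; set tq := (co a b q).2
  have hci := central_identity hxn hxrep
  -- va = (-tx/sx) • vb
  have hva : a - ⟪a, x⟫ • x = (-(tx / sx)) • (b - ⟪b, x⟫ • x) := by
    have h1 : sx • (a - ⟪a, x⟫ • x) = (-tx) • (b - ⟪b, x⟫ • x) := by
      rw [neg_smul, eq_neg_iff_add_eq_zero]
      exact hci
    calc a - ⟪a, x⟫ • x = sx⁻¹ • (sx • (a - ⟪a, x⟫ • x)) := by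
          rw [smul_smul, inv_mul_cancel₀ (ne_of_gt hs), one_smul]
      _ = (-(tx / sx)) • (b - ⟪b, x⟫ • x) := by
          rw [h1, smul_smul]
          congr 1
          field_simp
  have hqd : q - ⟪q, x⟫ • x = sq • (a - ⟪a, x⟫ • x) + tq • (b - ⟪b, x⟫ • x) := by
    have hlin : ⟪q, x⟫ = sq * ⟪a, x⟫ + tq * ⟪b, x⟫ := by
      conv_lhs => rw [hqrep]
      rw [inner_add_left, real_inner_smul_left, real_inner_smul_left]
    rw [hlin]
    conv_lhs => rw [hqrep]
    module
  rw [hqd, hva, smul_smul]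
  have : delta a b x q / sx = sq * (-(tx / sx)) + tq := by
    unfold delta
    field_simp
    ring
  rw [this, add_smul]

lemma tangent_eq_of_delta_pos {a b x q : E3} (hab : Indep2 a b) (hx : x ∈ arc a b)
    (hq : q ∈ arc a b) (hd : 0 < delta a b x q) : tangentVec x q = tangentVec x b := by
  obtain ⟨hxn, hxs, hxt, hxrep⟩ := arc_co hab hx
  obtain ⟨hqn, hqs, hqt, hqrep⟩ := arc_co hab hq
  have hsx : 0 < (co a b x).1 := by
    rcases eq_or_lt_of_le hxs with h0 | h0
    · exfalso
      unfold delta at hd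
      nlinarith
    · exact h0
  rw [tangentVec_eq_nmz, tangentVec_eq_nmz, tangent_decomp hab hx hq hsx,
    nmz_smul_pos (div_pos hd hsx)]

lemma tangent_eq_of_delta_neg {a b x q : E3} (hab : Indep2 a b) (hx : x ∈ arc a b)
    (hq : q ∈ arc a b) (hd : delta a b x q < 0) : tangentVec x q = tangentVec x a := by
  have hx' : x ∈ arc b a := by rwa [← arc_comm]
  have hq' : q ∈ arc b a := by rwa [← arc_comm]
  exact tangent_eq_of_delta_pos hab.symm hx' hq'
    (by rw [delta_swap hab hx hq]; linarith)

set_option linter.unusedVariables false in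
lemma tangent_opp {a b x : E3} (hab : Indep2 a b) (ha : ‖a‖ = 1) (hb : ‖b‖ = 1)
    (hx : x ∈ arc a b) (hs : 0 < (co a b x).1) (ht : 0 < (co a b x).2) :
    tangentVec x a = - tangentVec x b := by
  have hda : delta a b x a = -(co a b x).2 := by
    unfold delta; rw [co_a hab]; ring
  have hdec := tangent_decomp hab hx (arc_endpoints_mem ha hb).1 hs
  rw [tangentVec_eq_nmz, tangentVec_eq_nmz, hdec, hda,
    nmz_smul_neg (by apply div_neg_of_neg_of_pos <;> [linarith; exact hs])]

lemma tangent_vb_ne_zero {a b x : E3} (hab : Indep2 a b) (ha : ‖a‖ = 1) (hb : ‖b‖ = 1)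
    (hx : x ∈ arc a b) (hs : 0 < (co a b x).1) (ht : 0 < (co a b x).2) :
    b - ⟪b, x⟫ • x ≠ 0 := by
  obtain ⟨hxn, hxs, hxt, hxrep⟩ := arc_co hab hx
  intro hvb
  have hci := central_identity hxn hxrep
  have hva : a - ⟪a, x⟫ • x = 0 := by
    rw [hvb, smul_zero, add_zero] at hci
    rcases smul_eq_zero.mp hci with h | h
    · exact absurd h (ne_of_gt hs)
    · exact h
  -- a = μ x, b = ν x
  set μ := (⟪a, x⟫ : ℝ) with hμ
  set ν := (⟪b, x⟫ : ℝ) with hν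
  have hA : a = μ • x := by rwa [sub_eq_zero] at hva
  have hB : b = ν • x := by rwa [sub_eq_zero] at hvb
  have hcomb : ν • a + (-μ) • b = 0 := by
    rw [hA, hB]
    module
  have hν0 := (hab _ _ hcomb).1
  rw [hν0, zero_smul] at hB
  rw [hB, norm_zero] at hb
  norm_num at hb

lemma det3_expand (x u w : E3) : det3 x u w =
    x 0 * (u 1 * w 2 - u 2 * w 1) - x 1 * (u 0 * w 2 - u 2 * w 0)
      + x 2 * (u 0 * w 1 - u 1 * w 0) := by
  unfold det3
  rw [Matrix.det_fin_three]
  simp [Matrix.of_apply]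
  ring

lemma det3_neg₂ (x u w : E3) : det3 x (-u) w = - det3 x u w := by
  rw [det3_expand, det3_expand]
  simp only [PiLp.neg_apply]
  ring

lemma det3_neg₃ (x u w : E3) : det3 x u (-w) = - det3 x u w := by
  rw [det3_expand, det3_expand]
  simp only [PiLp.neg_apply]
  ring

lemma det3_eq_zero_dep {x u w : E3} (h : det3 x u w = 0) :
    ∃ c : Fin 3 → ℝ, c ≠ 0 ∧ c 0 • x + c 1 • u + c 2 • w = 0 := by
  obtain ⟨v, hv, hvM⟩ := Matrix.exists_vecMul_eq_zero_iff.mpr h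
  refine ⟨v, hv, ?_⟩
  ext j
  have hj := congrFun hvM j
  simp only [Matrix.vecMul, dotProduct, Fin.sum_univ_three] at hj
  have : (v 0 • x + v 1 • u + v 2 • w) j = v 0 * x j + v 1 * u j + v 2 * w j := by
    simp [PiLp.add_apply, PiLp.smul_apply]
  rw [this]
  fin_cases j <;>
    simpa [Matrix.of_apply] using hj

lemma inner_combo_x {x u : E3} (hx : ‖x‖ = 1) (hux : ⟪u, x⟫ = 0) (c0 c1 : ℝ)
    (h : c0 • x + c1 • u = 0) : c0 = 0 ∧ (‖u‖ = 1 → c1 = 0) := by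
  have hxx : ⟪x, x⟫ = 1 := by rw [real_inner_self_eq_norm_sq, hx]; norm_num
  have h2 : ⟪c0 • x + c1 • u, x⟫ = (0:ℝ) := by rw [h, inner_zero_left]
  rw [inner_add_left, real_inner_smul_left, real_inner_smul_left, hxx, hux] at h2
  have hc0 : c0 = 0 := by linarith
  refine ⟨hc0, fun hu => ?_⟩
  rw [hc0, zero_smul, zero_add] at h
  rcases smul_eq_zero.mp h with h' | h'
  · exact h'
  · rw [h', norm_zero] at hu; norm_num at hu

lemma mem_span_of_det_zero {x u w : E3} (hx : ‖x‖ = 1) (hu : ‖u‖ = 1)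
    (hux : ⟪u, x⟫ = 0) (h : det3 x u w = 0) :
    w ∈ Submodule.span ℝ ({x, u} : Set E3) := by
  obtain ⟨c, hc, hcomb⟩ := det3_eq_zero_dep h
  have hxmem : x ∈ Submodule.span ℝ ({x, u} : Set E3) :=
    Submodule.subset_span (Set.mem_insert _ _)
  have humem : u ∈ Submodule.span ℝ ({x, u} : Set E3) :=
    Submodule.subset_span (Set.mem_insert_of_mem _ rfl)
  rcases eq_or_ne (c 2) 0 with h2 | h2
  · exfalso
    rw [h2, zero_smul, add_zero] at hcomb
    obtain ⟨e0, e1⟩ := inner_combo_x hx hux _ _ hcomb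
    exact hc (funext fun j => by fin_cases j <;> simp [e0, e1 hu, h2])
  · have hw : w = (-(c 0) / c 2) • x + (-(c 1) / c 2) • u := by
      have : (c 2) • w = (-(c 0)) • x + (-(c 1)) • u := by
        rw [neg_smul, neg_smul]
        rw [← sub_eq_zero]
        linear_combination (norm := module) hcomb
      calc w = (c 2)⁻¹ • ((c 2) • w) := by
            rw [smul_smul, inv_mul_cancel₀ h2, one_smul]
        _ = (-(c 0) / c 2) • x + (-(c 1) / c 2) • u := by
            rw [this, smul_add, smul_smul, smul_smul]
            rw [div_eq_inv_mul, div_eq_inv_mul]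
    rw [hw]
    exact Submodule.add_mem _ (Submodule.smul_mem _ _ hxmem) (Submodule.smul_mem _ _ humem)

lemma finrank_span_xu {x u : E3} (hx : ‖x‖ = 1) (hu : ‖u‖ = 1) (hux : ⟪u, x⟫ = 0) :
    Module.finrank ℝ (Submodule.span ℝ ({x, u} : Set E3)) = 2 := by
  have hli : LinearIndependent ℝ ![x, u] := by
    rw [LinearIndependent.pair_iff]
    intro s t hst
    obtain ⟨e0, e1⟩ := inner_combo_x hx hux s t hst
    exact ⟨e0, e1 hu⟩
  have h := finrank_span_eq_card hli
  have hr : Set.range ![x, u] = ({x, u} : Set E3) := by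
    ext v
    simp [Matrix.range_cons, Matrix.range_empty]
    tauto
  rw [hr] at h
  rw [h]
  rfl

lemma mem_pointSet {G : GeoGraph} {x : E3} :
    x ∈ G.pointSet ↔ ∃ p ∈ G.edges, x ∈ arc p.1 p.2 := by
  simp [GeoGraph.pointSet]

lemma edge_indep {G : GeoGraph} {p : E3 × E3} (hp : p ∈ G.edges) :
    Indep2 p.1 p.2 ∧ ‖p.1‖ = 1 ∧ ‖p.2‖ = 1 := by
  have h1 := G.ends_mem p hp
  have ha := S2_norm (G.verts_sub h1.1)
  have hb := S2_norm (G.verts_sub h1.2)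
  exact ⟨indep2_of_unit ha hb (G.ends_ne p hp) (G.ends_nonantip p hp), ha, hb⟩

lemma crossing_not_vert {Gp Gm : GeoGraph} (hnp : IsNormalPair Gp Gm) {x : E3}
    (hx : x ∈ crossings Gp Gm) : x ∉ Gp.verts ∧ x ∉ Gm.verts := by
  obtain ⟨h1, h2⟩ := hx
  exact ⟨fun h => hnp.vertsP_off x h h2, fun h => hnp.vertsM_off x h h1⟩

lemma crossings_sub_refVerts {Gp Gm : GeoGraph} :
    crossings Gp Gm ⊆ refVerts Gp Gm := fun x hx => Or.inr hx

lemma crossings_finite {Gp Gm : GeoGraph} (hnp : IsNormalPair Gp Gm) :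
    (crossings Gp Gm).Finite := by
  have hsub : crossings Gp Gm ⊆
      ⋃ p ∈ Gp.edges, ⋃ q ∈ Gm.edges, (arc p.1 p.2 ∩ arc q.1 q.2) := by
    rintro x ⟨h1, h2⟩
    obtain ⟨p, hp, hxp⟩ := mem_pointSet.mp h1
    obtain ⟨q, hq, hxq⟩ := mem_pointSet.mp h2
    simp only [Set.mem_iUnion]
    exact ⟨p, hp, q, hq, hxp, hxq⟩
  refine Set.Finite.subset ?_ hsub
  refine Set.Finite.biUnion Gp.edges_finite (fun p hp => ?_)
  refine Set.Finite.biUnion Gm.edges_finite (fun q hq => ?_)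
  exact Set.Subsingleton.finite (hnp.single_cross p hp q hq)

lemma refVerts_finite {Gp Gm : GeoGraph} (hnp : IsNormalPair Gp Gm) :
    (refVerts Gp Gm).Finite :=
  ((Gp.verts_finite.union Gm.verts_finite).union (crossings_finite hnp))

lemma arc_unique {G : GeoGraph} {p q : E3 × E3} (hp : p ∈ G.edges) (hq : q ∈ G.edges)
    {x : E3} (hx1 : x ∈ arc p.1 p.2) (hx2 : x ∈ arc q.1 q.2) (hxv : x ∉ G.verts) :
    arc p.1 p.2 = arc q.1 q.2 := by
  by_contra hne
  have := G.edges_meet_ends p hp q hq hne ⟨hx1, hx2⟩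
  rcases this.1 with h | h <;>
    [exact hxv (h ▸ (G.ends_mem p hp).1); exact hxv (h ▸ (G.ends_mem p hp).2)]

lemma arc_sub_pointSet {G : GeoGraph} {p : E3 × E3} (hp : p ∈ G.edges) :
    arc p.1 p.2 ⊆ G.pointSet := fun x hx => mem_pointSet.mpr ⟨p, hp, hx⟩

/-- width contradiction -/
lemma width_le_two {Gp Gm : GeoGraph} {x vp vm : E3} (hvp : vp ∈ Gp.verts)
    (hvm : vm ∈ Gm.verts) (h1 : (refinement Gp Gm).Adj x vp)
    (h2 : (refinement Gp Gm).Adj x vm) : ¬ (2 < pairWidth Gp Gm) := by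
  intro hw
  have e1 : (refinement Gp Gm).edist vp x = 1 :=
    SimpleGraph.edist_eq_one_iff_adj.mpr h1.symm
  have e2 : (refinement Gp Gm).edist x vm = 1 :=
    SimpleGraph.edist_eq_one_iff_adj.mpr h2
  have htri := SimpleGraph.edist_triangle (G := refinement Gp Gm)
    (u := vp) (v := x) (w := vm)
  rw [e1, e2] at htri
  have hle : pairWidth Gp Gm ≤ (refinement Gp Gm).edist vp vm := by
    unfold pairWidth
    exact iInf_le_of_le vp (iInf_le_of_le hvp (iInf_le_of_le vm (iInf_le_of_le hvm le_rfl)))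
  have : pairWidth Gp Gm ≤ 2 := le_trans hle (le_trans htri (by norm_num))
  exact absurd (lt_of_lt_of_le hw this) (lt_irrefl _)


section Next

variable {Gp Gm : GeoGraph}

/-- hypothesis: `(a, b)` is (an orientation of) an edge of one of the two graphs -/
def IsEdgePair (Gp Gm : GeoGraph) (a b : E3) : Prop :=
  ((a, b) ∈ Gp.edges ∨ (b, a) ∈ Gp.edges) ∨ ((a, b) ∈ Gm.edges ∨ (b, a) ∈ Gm.edges)

lemma IsEdgePair.facts {a b : E3} (h : IsEdgePair Gp Gm a b) :
    Indep2 a b ∧ ‖a‖ = 1 ∧ ‖b‖ = 1 ∧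
      ∃ e : E3 × E3, (e ∈ Gp.edges ∨ e ∈ Gm.edges) ∧ arc e.1 e.2 = arc a b := by
  rcases h with (h | h) | (h | h)
  · obtain ⟨hi, h1, h2⟩ := edge_indep (G := Gp) h
    exact ⟨hi, h1, h2, (a, b), Or.inl h, rfl⟩
  · obtain ⟨hi, h1, h2⟩ := edge_indep (G := Gp) h
    exact ⟨hi.symm, h2, h1, (b, a), Or.inl h, arc_comm _ _⟩
  · obtain ⟨hi, h1, h2⟩ := edge_indep (G := Gm) h
    exact ⟨hi, h1, h2, (a, b), Or.inr h, rfl⟩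
  · obtain ⟨hi, h1, h2⟩ := edge_indep (G := Gm) h
    exact ⟨hi.symm, h2, h1, (b, a), Or.inr h, arc_comm _ _⟩

lemma IsEdgePair.verts {a b : E3} (h : IsEdgePair Gp Gm a b) :
    (a ∈ Gp.verts ∧ b ∈ Gp.verts) ∨ (a ∈ Gm.verts ∧ b ∈ Gm.verts) := by
  rcases h with (h | h) | (h | h)
  · exact Or.inl ⟨(Gp.ends_mem _ h).1, (Gp.ends_mem _ h).2⟩
  · exact Or.inl ⟨(Gp.ends_mem _ h).2, (Gp.ends_mem _ h).1⟩
  · exact Or.inr ⟨(Gm.ends_mem _ h).1, (Gm.ends_mem _ h).2⟩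
  · exact Or.inr ⟨(Gm.ends_mem _ h).2, (Gm.ends_mem _ h).1⟩

lemma IsEdgePair.mem_refVerts {a b : E3} (h : IsEdgePair Gp Gm a b) :
    a ∈ refVerts Gp Gm ∧ b ∈ refVerts Gp Gm := by
  rcases h.verts with ⟨h1, h2⟩ | ⟨h1, h2⟩
  · exact ⟨Or.inl (Or.inl h1), Or.inl (Or.inl h2)⟩
  · exact ⟨Or.inl (Or.inr h1), Or.inl (Or.inr h2)⟩

lemma IsEdgePair.classify (hnp : IsNormalPair Gp Gm) {a b r : E3}
    (h : IsEdgePair Gp Gm a b) (hr : r ∈ refVerts Gp Gm) (hra : r ∈ arc a b) :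
    r ∈ crossings Gp Gm ∨ r = a ∨ r = b := by
  rcases hr with (hv | hv) | hc
  · -- r ∈ Gp.verts
    rcases h with (he | he) | (he | he)
    · exact Or.inr (Gp.no_vertex_interior _ he r hv hra)
    · rcases Gp.no_vertex_interior _ he r hv (by rwa [arc_comm]) with h1 | h1
      · exact Or.inr (Or.inr h1)
      · exact Or.inr (Or.inl h1)
    · exact absurd (arc_sub_pointSet he hra) (hnp.vertsP_off r hv)
    · exact absurd (arc_sub_pointSet he (by rwa [arc_comm])) (hnp.vertsP_off r hv)
  · -- r ∈ Gm.verts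
    rcases h with (he | he) | (he | he)
    · exact absurd (arc_sub_pointSet he hra) (hnp.vertsM_off r hv)
    · exact absurd (arc_sub_pointSet he (by rwa [arc_comm])) (hnp.vertsM_off r hv)
    · exact Or.inr (Gm.no_vertex_interior _ he r hv hra)
    · rcases Gm.no_vertex_interior _ he r hv (by rwa [arc_comm]) with h1 | h1
      · exact Or.inr (Or.inr h1)
      · exact Or.inr (Or.inl h1)
  · exact Or.inl hc

lemma next_exists (hnp : IsNormalPair Gp Gm) {a b x : E3}
    (hedge : IsEdgePair Gp Gm a b) (hx : x ∈ arc a b) (hxc : x ∈ crossings Gp Gm) :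
    ∃ z, (refinement Gp Gm).Adj x z ∧ z ∈ arc a b ∧ 0 < delta a b x z ∧
      tangentVec x z = tangentVec x b ∧ (z ∈ crossings Gp Gm ∨ z = b) := by
  obtain ⟨hab, hau, hbu, e, he, hearc⟩ := hedge.facts
  have hxv := crossing_not_vert hnp hxc
  have hxa : x ≠ a := by
    rintro rfl
    rcases hedge.verts with ⟨h1, _⟩ | ⟨h1, _⟩
    · exact hxv.1 h1
    · exact hxv.2 h1
  have hxb : x ≠ b := by
    rintro rfl
    rcases hedge.verts with ⟨_, h1⟩ | ⟨_, h1⟩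
    · exact hxv.1 h1
    · exact hxv.2 h1
  obtain ⟨hsx, htx⟩ := interior_coords hab hau hbu hx hxa hxb
  -- the candidate set
  set S : Set E3 := {r | r ∈ refVerts Gp Gm ∧ r ∈ arc a b ∧ 0 < delta a b x r} with hS
  have hSfin : S.Finite :=
    Set.Finite.subset (refVerts_finite hnp) (fun r hr => hr.1)
  have hbS : b ∈ S := by
    refine ⟨hedge.mem_refVerts.2, (arc_endpoints_mem hau hbu).2, ?_⟩
    unfold delta
    rw [co_b hab]
    simpa using hsx
  obtain ⟨z, hzS, hzmin⟩ := hSfin.toFinset.exists_min_image (phi a b)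
    ⟨b, hSfin.mem_toFinset.mpr hbS⟩
  rw [hSfin.mem_toFinset] at hzS
  obtain ⟨hzrv, hza, hzd⟩ := hzS
  have hzmin' : ∀ r ∈ S, phi a b z ≤ phi a b r := by
    intro r hr
    exact hzmin r (hSfin.mem_toFinset.mpr hr)
  have hxrv : x ∈ refVerts Gp Gm := crossings_sub_refVerts hxc
  have hxz : x ≠ z := by
    rintro rfl
    rw [delta_self] at hzd
    exact lt_irrefl _ hzd
  -- adjacency
  have hadj : (refinement Gp Gm).Adj x z := by
    refine ⟨hxz, hxrv, hzrv, e, he, hearc ▸ hx, hearc ▸ hza, ?_⟩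
    intro r hrv hrxz
    have hra : r ∈ arc a b := arc_subset hx hza hrxz
    obtain ⟨hrS, α, β, hα, hβ, hrep⟩ := hrxz
    -- coordinates of r
    have hxco := (arc_co hab hx).2.2.2
    have hzco := (arc_co hab hza).2.2.2
    have hrco : co a b r = (α * (co a b x).1 + β * (co a b z).1,
        α * (co a b x).2 + β * (co a b z).2) := by
      apply co_eq hab
      rw [hrep]
      conv_lhs => rw [hxco, hzco]
      module
    have hdxr : delta a b x r = β * delta a b x z := by
      unfold delta
      rw [hrco]
      dsimp only
      ring
    have hdzr : delta a b z r = -(α * delta a b x z) := by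
      unfold delta
      rw [hrco]
      dsimp only
      ring
    rcases eq_or_lt_of_le hβ with hβ0 | hβ0
    · left
      apply delta_eq_zero hab hx hra
      rw [hdxr, ← hβ0]
      ring
    · right
      have hrS' : r ∈ S := ⟨hrv, hra, by rw [hdxr]; positivity⟩
      have h1 : 0 ≤ delta a b z r :=
        (delta_nonneg_iff_phi hab hza hra).mpr (hzmin' r hrS')
      have hα0 : α = 0 := by
        rw [hdzr] at h1
        nlinarith
      apply delta_eq_zero hab hza hra
      rw [hdzr, hα0]
      ring
  refine ⟨z, hadj, hza, hzd, tangent_eq_of_delta_pos hab hx hza hzd, ?_⟩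
  rcases hedge.classify hnp hzrv hza with h | h | h
  · exact Or.inl h
  · exfalso
    rw [h] at hzd
    unfold delta at hzd
    rw [co_a hab] at hzd
    simp at hzd
    linarith
  · exact Or.inr h

end Next


lemma rep_a {a b x : E3} {s t : ℝ} (hs : s ≠ 0) (hrep : x = s • a + t • b) :
    a = s⁻¹ • (x - t • b) := by
  rw [hrep, add_sub_cancel_right, smul_smul, inv_mul_cancel₀ hs, one_smul]

lemma det_ne_zero {Gp Gm : GeoGraph} (hnp : IsNormalPair Gp Gm) {p q : E3 × E3}
    (hp : p ∈ Gp.edges) (hq : q ∈ Gm.edges) {x : E3}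
    (hxp : x ∈ arc p.1 p.2) (hxq : x ∈ arc q.1 q.2) (hxc : x ∈ crossings Gp Gm) :
    det3 x (tangentVec x p.2) (tangentVec x q.2) ≠ 0 := by
  obtain ⟨habp, hau, hbu⟩ := edge_indep hp
  obtain ⟨habq, hcu, hdu⟩ := edge_indep hq
  have hxv := crossing_not_vert hnp hxc
  have hxn : ‖x‖ = 1 := (arc_co habp hxp).1
  have hxa : x ≠ p.1 := fun h => hxv.1 (h ▸ (Gp.ends_mem p hp).1)
  have hxb : x ≠ p.2 := fun h => hxv.1 (h ▸ (Gp.ends_mem p hp).2)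
  have hxc' : x ≠ q.1 := fun h => hxv.2 (h ▸ (Gm.ends_mem q hq).1)
  have hxd : x ≠ q.2 := fun h => hxv.2 (h ▸ (Gm.ends_mem q hq).2)
  obtain ⟨hsp, htp⟩ := interior_coords habp hau hbu hxp hxa hxb
  obtain ⟨hsq, htq⟩ := interior_coords habq hcu hdu hxq hxc' hxd
  set u := tangentVec x p.2 with hu
  set w := tangentVec x q.2 with hw
  have hvb : p.2 - ⟪p.2, x⟫ • x ≠ 0 := tangent_vb_ne_zero habp hau hbu hxp hsp htp
  have hvd : q.2 - ⟪q.2, x⟫ • x ≠ 0 := tangent_vb_ne_zero habq hcu hdu hxq hsq htq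
  have huu : ‖u‖ = 1 := by rw [hu, tangentVec_eq_nmz]; exact nmz_norm hvb
  have hux : ⟪u, x⟫ = 0 := inner_tangentVec hxn
  intro hdet
  set W := Submodule.span ℝ ({x, u} : Set E3) with hWdef
  have hxW : x ∈ W := Submodule.subset_span (Set.mem_insert _ _)
  have huW : u ∈ W := Submodule.subset_span (Set.mem_insert_of_mem _ rfl)
  have hwW : w ∈ W := mem_span_of_det_zero hxn huu hux hdet
  have hbW : p.2 ∈ W := by
    have h1 : p.2 = ‖p.2 - ⟪p.2, x⟫ • x‖ • u + ⟪p.2, x⟫ • x := by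
      rw [hu, tangentVec_eq_nmz, ← norm_smul_nmz]
      abel
    rw [h1]
    exact Submodule.add_mem _ (Submodule.smul_mem _ _ huW) (Submodule.smul_mem _ _ hxW)
  have haW : p.1 ∈ W := by
    have h1 : p.1 = (co p.1 p.2 x).1⁻¹ • (x - (co p.1 p.2 x).2 • p.2) :=
      rep_a (ne_of_gt hsp) (arc_co habp hxp).2.2.2
    rw [h1]
    exact Submodule.smul_mem _ _ (Submodule.sub_mem _ hxW (Submodule.smul_mem _ _ hbW))
  have hdW : q.2 ∈ W := by
    have h1 : q.2 = ‖q.2 - ⟪q.2, x⟫ • x‖ • w + ⟪q.2, x⟫ • x := by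
      rw [hw, tangentVec_eq_nmz, ← norm_smul_nmz]
      abel
    rw [h1]
    exact Submodule.add_mem _ (Submodule.smul_mem _ _ hwW) (Submodule.smul_mem _ _ hxW)
  have hcW : q.1 ∈ W := by
    have h1 : q.1 = (co q.1 q.2 x).1⁻¹ • (x - (co q.1 q.2 x).2 • q.2) :=
      rep_a (ne_of_gt hsq) (arc_co habq hxq).2.2.2
    rw [h1]
    exact Submodule.smul_mem _ _ (Submodule.sub_mem _ hxW (Submodule.smul_mem _ _ hdW))
  refine hnp.transversal p hp q hq ⟨x, hxp, hxq⟩ W (finrank_span_xu hxn huu hux) ?_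
  intro v hv
  simp only [Set.mem_insert_iff, Set.mem_singleton_iff] at hv
  rcases hv with rfl | rfl | rfl | rfl
  · exact haW
  · exact hbW
  · exact hcW
  · exact hdW


section Step

variable {Gp Gm : GeoGraph}

/-- The disjunction appearing in the definition of a well-formed loop. -/
def Valid (Gp Gm : GeoGraph) (y x z : E3) : Prop :=
  (((EdgeInGraph Gp y x ∧ EdgeInGraph Gp x z) ∨
      (EdgeInGraph Gm y x ∧ EdgeInGraph Gm x z)) ∧
      -tangentVec x y = tangentVec x z) ∨
  (EdgeInGraph Gm y x ∧ EdgeInGraph Gp x z ∧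
    det3 x (-tangentVec x y) (tangentVec x z) < 0) ∨
  (EdgeInGraph Gp y x ∧ EdgeInGraph Gm x z ∧
    det3 x (-tangentVec x y) (tangentVec x z) > 0)

lemma delta_ne_zero_of_ne {a b x y : E3} (hab : Indep2 a b) (hx : x ∈ arc a b)
    (hy : y ∈ arc a b) (hne : y ≠ x) : delta a b x y ≠ 0 :=
  fun h => hne (delta_eq_zero hab hx hy h)

lemma orient_in {G' : GeoGraph} {p : E3 × E3} (hp : p ∈ G'.edges) {x y : E3}
    (hxp : x ∈ arc p.1 p.2) (hyp : y ∈ arc p.1 p.2) (hne : y ≠ x)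
    (hxa : x ≠ p.1) (hxb : x ≠ p.2) :
    ∃ a b : E3, ((a, b) ∈ G'.edges ∨ (b, a) ∈ G'.edges) ∧ x ∈ arc a b ∧
      y ∈ arc a b ∧ arc a b = arc p.1 p.2 ∧ delta a b x y < 0 ∧
      (-tangentVec x y = tangentVec x b) ∧
      (tangentVec x b = tangentVec x p.2 ∨ tangentVec x b = -tangentVec x p.2) := by
  obtain ⟨hab, hau, hbu⟩ := edge_indep hp
  obtain ⟨hsx, htx⟩ := interior_coords hab hau hbu hxp hxa hxb
  have hopp : tangentVec x p.1 = -tangentVec x p.2 := tangent_opp hab hau hbu hxp hsx htx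
  have hd0 : delta p.1 p.2 x y ≠ 0 := delta_ne_zero_of_ne hab hxp hyp hne
  rcases lt_or_gt_of_ne hd0 with hd | hd
  · refine ⟨p.1, p.2, Or.inl (by rw [Prod.mk.eta]; exact hp), hxp, hyp, rfl, hd, ?_, Or.inl rfl⟩
    rw [tangent_eq_of_delta_neg hab hxp hyp hd, hopp, neg_neg]
  · have hxp' : x ∈ arc p.2 p.1 := by rwa [← arc_comm]
    have hyp' : y ∈ arc p.2 p.1 := by rwa [← arc_comm]
    refine ⟨p.2, p.1, Or.inr (by rw [Prod.mk.eta]; exact hp), hxp', hyp', arc_comm _ _, ?_, ?_,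
      Or.inr hopp⟩
    · rw [delta_swap hab hxp hyp]; linarith
    · rw [tangent_eq_of_delta_neg hab.symm hxp' hyp'
        (by rw [delta_swap hab hxp hyp]; linarith), hopp]

lemma turn_pick {G' : GeoGraph} {q : E3 × E3} (hq : q ∈ G'.edges) {x u : E3}
    (hxq : x ∈ arc q.1 q.2) (hxa : x ≠ q.1) (hxb : x ≠ q.2)
    (hDu : det3 x u (tangentVec x q.2) ≠ 0) {ε : ℝ} (hε : ε = 1 ∨ ε = -1) :
    ∃ c d : E3, ((c, d) ∈ G'.edges ∨ (d, c) ∈ G'.edges) ∧ x ∈ arc c d ∧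
      arc c d = arc q.1 q.2 ∧ 0 < ε * det3 x u (tangentVec x d) := by
  obtain ⟨hab, hcu, hdu⟩ := edge_indep hq
  obtain ⟨hsx, htx⟩ := interior_coords hab hcu hdu hxq hxa hxb
  have hopp : tangentVec x q.1 = -tangentVec x q.2 := tangent_opp hab hcu hdu hxq hsx htx
  have hε0 : ε ≠ 0 := by rcases hε with rfl | rfl <;> norm_num
  have hne : ε * det3 x u (tangentVec x q.2) ≠ 0 := mul_ne_zero hε0 hDu
  rcases lt_or_gt_of_ne hne with h | h
  · refine ⟨q.2, q.1, Or.inr (by rw [Prod.mk.eta]; exact hq), by rwa [← arc_comm],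
      arc_comm _ _, ?_⟩
    rw [hopp, det3_neg₃]
    linarith
  · exact ⟨q.1, q.2, Or.inl (by rw [Prod.mk.eta]; exact hq), hxq, rfl, h⟩

lemma edgeInGraph_of_pair {G' : GeoGraph} {a b x y : E3}
    (h : (a, b) ∈ G'.edges ∨ (b, a) ∈ G'.edges) (hx : x ∈ arc a b) (hy : y ∈ arc a b) :
    EdgeInGraph G' x y := by
  rcases h with h | h
  · exact ⟨(a, b), h, hx, hy⟩
  · exact ⟨(b, a), h, by rwa [← arc_comm], by rwa [← arc_comm]⟩

lemma step_exists (hnp : IsNormalPair Gp Gm) (hw : 2 < pairWidth Gp Gm) {y x : E3}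
    (hx : x ∈ crossings Gp Gm) (hadj : (refinement Gp Gm).Adj y x) :
    ∃ z, z ∈ crossings Gp Gm ∧ (refinement Gp Gm).Adj x z ∧ Valid Gp Gm y x z := by
  obtain ⟨hne, hyrv, hxrv, e, he, hye, hxe, -⟩ := hadj
  obtain ⟨hx1, hx2⟩ := hx
  obtain ⟨p, hp, hxp⟩ := mem_pointSet.mp hx1
  obtain ⟨q, hq, hxq⟩ := mem_pointSet.mp hx2
  have hxcross : x ∈ crossings Gp Gm := ⟨hx1, hx2⟩
  have hxv := crossing_not_vert hnp hxcross
  have hxp1 : x ≠ p.1 := fun h => hxv.1 (h ▸ (Gp.ends_mem p hp).1)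
  have hxp2 : x ≠ p.2 := fun h => hxv.1 (h ▸ (Gp.ends_mem p hp).2)
  have hxq1 : x ≠ q.1 := fun h => hxv.2 (h ▸ (Gm.ends_mem q hq).1)
  have hxq2 : x ≠ q.2 := fun h => hxv.2 (h ▸ (Gm.ends_mem q hq).2)
  have hyx : y ≠ x := hne
  have hD0 : det3 x (tangentVec x p.2) (tangentVec x q.2) ≠ 0 :=
    det_ne_zero hnp hp hq hxp hxq hxcross
  rcases he with heP | heM
  · -- incoming along a positive edge
    have harc : arc e.1 e.2 = arc p.1 p.2 := arc_unique heP hp hxe hxp hxv.1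
    have hyp : y ∈ arc p.1 p.2 := harc ▸ hye
    obtain ⟨a, b, hPedge, hxab, hyab, -, -, hu, hbflip⟩ :=
      orient_in hp hxp hyp hyx hxp1 hxp2
    have hEyx : EdgeInGraph Gp y x := edgeInGraph_of_pair hPedge hyab hxab
    obtain ⟨z, hzadj, hzarc, -, hztan, hzcls⟩ :=
      next_exists hnp (Or.inl hPedge) hxab hxcross
    rcases hzcls with hzc | rfl
    · -- straight
      refine ⟨z, hzc, hzadj, Or.inl ⟨Or.inl ⟨hEyx, edgeInGraph_of_pair hPedge hxab hzarc⟩, ?_⟩⟩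
      rw [hu, hztan]
    · -- next point along the positive edge is a vertex: turn left onto the negative edge
      have hbvert : z ∈ Gp.verts := by
        rcases hPedge with h | h
        · exact (Gp.ends_mem _ h).2
        · exact (Gp.ends_mem _ h).1
      have hDu : det3 x (tangentVec x z) (tangentVec x q.2) ≠ 0 := by
        rcases hbflip with h | h
        · rw [h]; exact hD0
        · rw [h, det3_neg₂]; simpa using hD0
      obtain ⟨c, d, hMedge, hxcd, harccd, hdet⟩ :=
        turn_pick hq hxq hxq1 hxq2 hDu (Or.inl rfl) (ε := 1)
      obtain ⟨z2, hz2adj, hz2arc, -, hz2tan, hz2cls⟩ :=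
        next_exists hnp (Or.inr hMedge) hxcd hxcross
      rcases hz2cls with hz2c | rfl
      · refine ⟨z2, hz2c, hz2adj, Or.inr (Or.inr ⟨hEyx,
          edgeInGraph_of_pair hMedge hxcd hz2arc, ?_⟩)⟩
        rw [hu, hz2tan]
        have := hdet
        linarith [hdet]
      · exfalso
        have hdvert : z2 ∈ Gm.verts := by
          rcases hMedge with h | h
          · exact (Gm.ends_mem _ h).2
          · exact (Gm.ends_mem _ h).1
        exact width_le_two hbvert hdvert hzadj hz2adj hw
  · -- incoming along a negative edge
    have harc : arc e.1 e.2 = arc q.1 q.2 := arc_unique heM hq hxe hxq hxv.2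
    have hyq : y ∈ arc q.1 q.2 := harc ▸ hye
    obtain ⟨a, b, hMedge, hxab, hyab, -, -, hu, hbflip⟩ :=
      orient_in hq hxq hyq hyx hxq1 hxq2
    have hEyx : EdgeInGraph Gm y x := edgeInGraph_of_pair hMedge hyab hxab
    obtain ⟨z, hzadj, hzarc, -, hztan, hzcls⟩ :=
      next_exists hnp (Or.inr hMedge) hxab hxcross
    rcases hzcls with hzc | rfl
    · -- straight
      refine ⟨z, hzc, hzadj, Or.inl ⟨Or.inr ⟨hEyx, edgeInGraph_of_pair hMedge hxab hzarc⟩, ?_⟩⟩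
      rw [hu, hztan]
    · -- turn right onto the positive edge
      have hbvert : z ∈ Gm.verts := by
        rcases hMedge with h | h
        · exact (Gm.ends_mem _ h).2
        · exact (Gm.ends_mem _ h).1
      -- det3 x (T x z) (T x p.2) ≠ 0 : use antisymmetry-free route via q.2 flip
      have hDu : det3 x (tangentVec x z) (tangentVec x p.2) ≠ 0 := by
        have hswap : det3 x (tangentVec x p.2) (tangentVec x z) ≠ 0 := by
          rcases hbflip with h | h
          · rw [h]; exact hD0
          · rw [h, det3_neg₃]; simpa using hD0
        intro h0
        apply hswap
        rw [det3_expand] at h0 ⊢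
        nlinarith [h0]
      obtain ⟨c, d, hPedge2, hxcd, harccd, hdet⟩ :=
        turn_pick hp hxp hxp1 hxp2 hDu (Or.inr rfl) (ε := -1)
      obtain ⟨z2, hz2adj, hz2arc, -, hz2tan, hz2cls⟩ :=
        next_exists hnp (Or.inl hPedge2) hxcd hxcross
      rcases hz2cls with hz2c | rfl
      · refine ⟨z2, hz2c, hz2adj, Or.inr (Or.inl ⟨hEyx,
          edgeInGraph_of_pair hPedge2 hxcd hz2arc, ?_⟩)⟩
        rw [hu, hz2tan]
        linarith [hdet]
      · exfalso
        have hdvert : z2 ∈ Gp.verts := by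
          rcases hPedge2 with h | h
          · exact (Gp.ends_mem _ h).2
          · exact (Gp.ends_mem _ h).1
        exact width_le_two hdvert hbvert hz2adj hzadj hw

end Step


lemma arc_mem_norm {a b x : E3} (hx : x ∈ arc a b) : ‖x‖ = 1 := S2_norm hx.1

lemma tangent_zero_cases {x y : E3} (hx : ‖x‖ = 1) (hy : ‖y‖ = 1)
    (h : tangentVec x y = 0) : y = x ∨ y = -x := by
  have hv : y - ⟪y, x⟫ • x = 0 := by
    rw [tangentVec_eq_nmz] at h
    exact nmz_zero_iff.mp h
  have hyc : y = ⟪y, x⟫ • x := by rwa [sub_eq_zero] at hv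
  have habs : |(⟪y, x⟫ : ℝ)| = 1 := by
    have := congrArg norm hyc
    rw [norm_smul, Real.norm_eq_abs, hx, mul_one, hy] at this
    exact this.symm
  rcases (abs_eq (by norm_num : (0:ℝ) ≤ 1)).mp habs with h1 | h1
  · left; rw [hyc, h1, one_smul]
  · right; rw [hyc, h1, neg_one_smul]

lemma valid_ne {Gp Gm : GeoGraph} (hnp : IsNormalPair Gp Gm) {y x z : E3} (hyx : y ≠ x)
    (hval : Valid Gp Gm y x z) : z ≠ y := by
  rintro rfl
  rcases hval with ⟨hedges, htan⟩ | ⟨h1, h2, -⟩ | ⟨h1, h2, -⟩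
  · -- straight: tangent vanishes
    have hT : tangentVec x z = 0 := by
      have h2 : tangentVec x z + tangentVec x z = 0 := by
        nth_rewrite 1 [← htan]
        exact neg_add_cancel _
      have h3 : (2:ℝ) • tangentVec x z = 0 := by rw [two_smul]; exact h2
      rcases smul_eq_zero.mp h3 with h | h
      · norm_num at h
      · exact h
    obtain ⟨e, he, hye, hxe, hind⟩ :
        ∃ e : E3 × E3, (e ∈ Gp.edges ∨ e ∈ Gm.edges) ∧ z ∈ arc e.1 e.2 ∧
          x ∈ arc e.1 e.2 ∧ Indep2 e.1 e.2 := by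
      rcases hedges with ⟨⟨e, he, hye, hxe⟩, -⟩ | ⟨⟨e, he, hye, hxe⟩, -⟩
      · exact ⟨e, Or.inl he, hye, hxe, (edge_indep he).1⟩
      · exact ⟨e, Or.inr he, hye, hxe, (edge_indep he).1⟩
    rcases tangent_zero_cases (arc_mem_norm hxe) (arc_mem_norm hye) hT with h | h
    · exact hyx h
    · exact arc_not_antipodal hind hxe hye h
  · obtain ⟨e1, he1, hye1, hxe1⟩ := h1
    obtain ⟨e2, he2, hxe2, hye2⟩ := h2
    exact hyx.symm (hnp.single_cross e2 he2 e1 he1 ⟨hxe2, hxe1⟩ ⟨hye2, hye1⟩)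
  · obtain ⟨e1, he1, hye1, hxe1⟩ := h1
    obtain ⟨e2, he2, hxe2, hye2⟩ := h2
    exact hyx.symm (hnp.single_cross e1 he1 e2 he2 ⟨hxe1, hxe2⟩ ⟨hye1, hye2⟩)

lemma start_exists {Gp Gm : GeoGraph} (hnp : IsNormalPair Gp Gm)
    (hw : 2 < pairWidth Gp Gm) (hcross : (crossings Gp Gm).Nonempty) :
    ∃ y x : E3, x ∈ crossings Gp Gm ∧ (refinement Gp Gm).Adj y x ∧
      y ∈ crossings Gp Gm := by
  obtain ⟨c, hc⟩ := hcross
  obtain ⟨hc1, hc2⟩ := hc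
  obtain ⟨p, hp, hcp⟩ := mem_pointSet.mp hc1
  obtain ⟨q, hq, hcq⟩ := mem_pointSet.mp hc2
  have hcc : c ∈ crossings Gp Gm := ⟨hc1, hc2⟩
  have hEP : IsEdgePair Gp Gm p.1 p.2 := Or.inl (Or.inl (by rw [Prod.mk.eta]; exact hp))
  have hEQ : IsEdgePair Gp Gm q.1 q.2 := Or.inr (Or.inl (by rw [Prod.mk.eta]; exact hq))
  obtain ⟨z1, hz1adj, -, -, -, hz1cls⟩ := next_exists hnp hEP hcp hcc
  rcases hz1cls with hz1c | rfl
  · exact ⟨z1, c, hcc, hz1adj.symm, hz1c⟩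
  · obtain ⟨z2, hz2adj, -, -, -, hz2cls⟩ := next_exists hnp hEQ hcq hcc
    rcases hz2cls with hz2c | rfl
    · exact ⟨z2, c, hcc, hz2adj.symm, hz2c⟩
    · exact absurd hw (fun hw' => width_le_two (Gp.ends_mem p hp).2 (Gm.ends_mem q hq).2
        hz1adj hz2adj hw')


/-- a "good state": directed deep edge of the refinement graph -/
def GoodSt (Gp Gm : GeoGraph) (s : E3 × E3) : Prop :=
  IsNormalPair Gp Gm ∧ 2 < pairWidth Gp Gm ∧ s.2 ∈ crossings Gp Gm ∧
    (refinement Gp Gm).Adj s.1 s.2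

open Classical in
noncomputable def nextState (Gp Gm : GeoGraph) (s : E3 × E3) : E3 × E3 :=
  if h : GoodSt Gp Gm s then
    (s.2, (step_exists h.1 h.2.1 h.2.2.1 h.2.2.2).choose)
  else s

lemma nextState_spec {Gp Gm : GeoGraph} {s : E3 × E3} (h : GoodSt Gp Gm s) :
    (nextState Gp Gm s).1 = s.2 ∧ (nextState Gp Gm s).2 ∈ crossings Gp Gm ∧
    (refinement Gp Gm).Adj s.2 (nextState Gp Gm s).2 ∧
    Valid Gp Gm s.1 s.2 (nextState Gp Gm s).2 := by
  have hspec := (step_exists h.1 h.2.1 h.2.2.1 h.2.2.2).choose_spec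
  unfold nextState
  rw [dif_pos h]
  exact ⟨rfl, hspec.1, hspec.2.1, hspec.2.2⟩

lemma GoodSt.next {Gp Gm : GeoGraph} {s : E3 × E3} (h : GoodSt Gp Gm s) :
    GoodSt Gp Gm (nextState Gp Gm s) := by
  obtain ⟨h1, h2, h3, h4⟩ := nextState_spec h
  exact ⟨h.1, h.2.1, h2, by rw [h1]; exact h3⟩


/-- A *well-formed loop* in the refinement graph `H` of the pair `(G⁺, G⁻)`:
a closed walk `f 0, f 1, …, f k = f 0` in `H` all of whose edges are deep
(all vertices visited are crossings), with `k ≥ 3`, the vertices `f 0, …, f (k-1)`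
pairwise distinct, such that at each intermediate vertex `x = f i` (`1 ≤ i ≤ k-1`),
with incoming tangent `u = -t(x, f (i-1))` and outgoing tangent `w = t(x, f (i+1))`,
the walk either goes straight (the two edges have the same sign and `u = w`),
turns right from a negative to a positive edge (`det(x,u,w) < 0`), or turns left
from a positive to a negative edge (`det(x,u,w) > 0`). -/
def IsWellFormedLoop (Gp Gm : GeoGraph) (k : ℕ) (f : ℕ → E3) : Prop :=
  3 ≤ k ∧ f k = f 0 ∧
  (∀ i < k, (refinement Gp Gm).Adj (f i) (f (i + 1))) ∧
  (∀ i ≤ k, f i ∈ crossings Gp Gm) ∧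
  (∀ i < k, ∀ j < k, i ≠ j → f i ≠ f j) ∧
  (∀ i, 1 ≤ i → i ≤ k - 1 →
    (((EdgeInGraph Gp (f (i - 1)) (f i) ∧ EdgeInGraph Gp (f i) (f (i + 1))) ∨
      (EdgeInGraph Gm (f (i - 1)) (f i) ∧ EdgeInGraph Gm (f i) (f (i + 1)))) ∧
      -tangentVec (f i) (f (i - 1)) = tangentVec (f i) (f (i + 1))) ∨
    (EdgeInGraph Gm (f (i - 1)) (f i) ∧ EdgeInGraph Gp (f i) (f (i + 1)) ∧
      det3 (f i) (-tangentVec (f i) (f (i - 1))) (tangentVec (f i) (f (i + 1))) < 0) ∨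
    (EdgeInGraph Gp (f (i - 1)) (f i) ∧ EdgeInGraph Gm (f i) (f (i + 1)) ∧
      det3 (f i) (-tangentVec (f i) (f (i - 1))) (tangentVec (f i) (f (i + 1))) > 0))

/-- If a normal pair of geodesic graphs on `S²` with at least one
crossing has width greater than two, then its refinement graph contains a
well-formed loop. -/
theorem exists_wellFormedLoop (Gp Gm : GeoGraph) (hnp : IsNormalPair Gp Gm)
    (hcross : (crossings Gp Gm).Nonempty)
    (hw : 2 < pairWidth Gp Gm) :
    ∃ (k : ℕ) (f : ℕ → E3), IsWellFormedLoop Gp Gm k f := by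
  classical
  obtain ⟨y0, x0, hx0, hadj0, hy0⟩ := start_exists hnp hw hcross
  set seq : ℕ → E3 × E3 := fun n => (nextState Gp Gm)^[n] (y0, x0) with hseqdef
  have hsucc : ∀ n, seq (n + 1) = nextState Gp Gm (seq n) := fun n =>
    Function.iterate_succ_apply' (nextState Gp Gm) n _
  have hgood : ∀ n, GoodSt Gp Gm (seq n) := by
    intro n
    induction n with
    | zero => exact ⟨hnp, hw, hx0, hadj0⟩
    | succ n ih => rw [hsucc n]; exact ih.next
  set v : ℕ → E3 := fun n => (seq n).2 with hvdef
  have hvc : ∀ n, v n ∈ crossings Gp Gm := fun n => (hgood n).2.2.1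
  have hadjv : ∀ n, (refinement Gp Gm).Adj (v n) (v (n + 1)) := by
    intro n
    have h := (nextState_spec (hgood n)).2.2.1
    rwa [← hsucc n] at h
  have hprev : ∀ n, (seq (n + 1)).1 = v n := by
    intro n
    rw [hsucc n]
    exact (nextState_spec (hgood n)).1
  have hvalid : ∀ n, Valid Gp Gm (v n) (v (n + 1)) (v (n + 2)) := by
    intro n
    have h := (nextState_spec (hgood (n + 1))).2.2.2
    rw [← hsucc (n + 1)] at h
    rwa [hprev n] at h
  -- pigeonhole
  have hfin : (crossings Gp Gm).Finite := crossings_finite hnp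
  have hrep : ∃ i j : ℕ, i ≠ j ∧ v i = v j := by
    haveI := hfin.to_subtype
    obtain ⟨i, j, hne, heq⟩ := Finite.exists_ne_map_eq_of_infinite
      (fun n : ℕ => (⟨v n, hvc n⟩ : crossings Gp Gm))
    exact ⟨i, j, hne, congrArg Subtype.val heq⟩
  have hPex : ∃ d, 0 < d ∧ ∃ i, v (i + d) = v i := by
    obtain ⟨i0, j0, hne0, heq0⟩ := hrep
    rcases Nat.lt_or_ge i0 j0 with h | h
    · exact ⟨j0 - i0, by omega, i0, by rw [show i0 + (j0 - i0) = j0 by omega]; exact heq0.symm⟩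
    · exact ⟨i0 - j0, by omega, j0, by rw [show j0 + (i0 - j0) = i0 by omega]; exact heq0⟩
  set d := Nat.find hPex with hddef
  obtain ⟨hdpos, i, hi⟩ := Nat.find_spec hPex
  have hdmin : ∀ d' < d, ¬ (0 < d' ∧ ∃ i, v (i + d') = v i) := fun d' h => Nat.find_min hPex h
  have hAdjNe : ∀ n, v n ≠ v (n + 1) := fun n => (hadjv n).ne
  have hd1 : d ≠ 1 := by
    rintro h1
    rw [← hddef, h1] at hi
    exact hAdjNe i hi.symm
  have hd2 : d ≠ 2 := by
    rintro h2
    rw [← hddef, h2] at hi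
    exact valid_ne hnp (hAdjNe i) (hvalid i) hi
  have hd3 : 3 ≤ d := by omega
  have hdist : ∀ l < d, ∀ m < d, l ≠ m → v (i + l) ≠ v (i + m) := by
    intro l hl m hm hlm heq
    rcases Nat.lt_or_ge l m with h | h
    · exact hdmin (m - l) (by omega) ⟨by omega, i + l,
        by rw [show i + l + (m - l) = i + m by omega]; exact heq.symm⟩
    · exact hdmin (l - m) (by omega) ⟨by omega, i + m,
        by rw [show i + m + (l - m) = i + l by omega]; exact heq⟩
  rw [← hddef] at hi
  refine ⟨d, fun l => v (i + l), hd3, by simpa using hi, ?_, ?_, ?_, ?_⟩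
  · intro l hl
    have h := hadjv (i + l)
    rwa [show i + l + 1 = i + (l + 1) by omega] at h
  · intro l hl
    exact hvc (i + l)
  · intro l hl m hm hlm
    exact hdist l hl m hm hlm
  · intro l hl1 hl2
    have hval := hvalid (i + (l - 1))
    rw [show i + (l - 1) + 1 = i + l by omega, show i + (l - 1) + 2 = i + (l + 1) by omega] at hval
    exact hval
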